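/- Let G be a finite cyclic group of order n ≥ 1 and X the augmentation ideal of ℤ[G], a free ℤ-module of rank n-1. Then there exist G-module homomorphisms e : ℤ → X ⊗_ℤ X and f : X ⊗_ℤ X → ℤ (with ℤ the trivial G-module and G acting diagonally on X ⊗ X) such that f ∘ e : ℤ → ℤ is multiplication by n-1. -/

import Mathlib

open MonoidAlgebra

/-- The augmentation map `ℤ[G] → ℤ` sending each group element to `1`. -/
noncomputable def augMap (G : Type*) [Group G] : MonoidAlgebra ℤ G →ₐ[ℤ] ℤ :=
  MonoidAlgebra.lift ℤ ℤ G 1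

/-- The augmentation ideal `X = ker(aug : ℤ[G] → ℤ)` as a ℤ-submodule of `ℤ[G]`. -/
noncomputable def augIdeal (G : Type*) [Group G] :
    Submodule ℤ (MonoidAlgebra ℤ G) :=
  LinearMap.ker (augMap G).toLinearMap

/-- The action of `g ∈ G` on the augmentation ideal, by left multiplication. -/
noncomputable def augAction {G : Type*} [Group G] (g : G) :
    augIdeal G →ₗ[ℤ] augIdeal G :=
  (LinearMap.mulLeft ℤ (MonoidAlgebra.single g (1 : ℤ))).restrict
    (p := augIdeal G) (q := augIdeal G)
    (by
      intro x hx
      have hx' : augMap G x = 0 := hx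
      have h1 : augMap G (MonoidAlgebra.single g (1 : ℤ)) = 1 := by
        simp [augMap]
      simp only [augIdeal, LinearMap.mem_ker, AlgHom.toLinearMap_apply,
        LinearMap.mulLeft_apply, map_mul, h1, one_mul, hx'])

set_option synthInstance.maxHeartbeats 1000000
set_option maxHeartbeats 1000000

section Aux
variable {G : Type*} [Group G]

lemma augMap_single (g : G) (a : ℤ) : augMap G (single g a) = a := by
  simp [augMap]

lemma mem_augIdeal_iff (x : MonoidAlgebra ℤ G) : x ∈ augIdeal G ↔ augMap G x = 0 := Iff.rfl

/-- basis elements g - 1 of the augmentation ideal -/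
noncomputable def xg (g : G) : augIdeal G :=
  ⟨single g 1 - 1, by
    rw [mem_augIdeal_iff, map_sub, augMap_single, map_one, sub_self]⟩

lemma coe_augAction (g : G) (x : augIdeal G) :
    (augAction g x : MonoidAlgebra ℤ G) = single g 1 * (x : MonoidAlgebra ℤ G) := rfl

lemma augAction_one : augAction (1 : G) = LinearMap.id := by
  ext x
  simp [coe_augAction, MonoidAlgebra.one_def]

lemma augAction_mul (g h : G) : augAction (g * h) = (augAction g).comp (augAction h) := by
  ext x
  simp [coe_augAction, ← single_mul_single, mul_assoc]

lemma augAction_xg (h g : G) : augAction h (xg g) = xg (h * g) - xg h := by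
  apply Subtype.ext
  push_cast [coe_augAction, xg]
  rw [mul_sub, single_mul_single, mul_one, mul_one]
  abel

end Aux

section Ind
open scoped Classical
variable {G : Type*} [Group G] [Fintype G] {σ : G}

lemma exists_pow (hgen : ∀ g : G, g ∈ Subgroup.zpowers σ) (g : G) : ∃ k : ℕ, σ ^ k = g := by
  have := hgen g
  rw [← mem_powers_iff_mem_zpowers] at this
  obtain ⟨k, hk⟩ := this
  exact ⟨k, hk⟩

noncomputable def rr (hgen : ∀ g : G, g ∈ Subgroup.zpowers σ) (g : G) : ℕ :=
  Nat.find (exists_pow hgen g)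

variable (hgen : ∀ g : G, g ∈ Subgroup.zpowers σ) {n : ℕ}

include hgen

lemma rr_spec (g : G) : σ ^ (rr hgen g) = g := Nat.find_spec (exists_pow hgen g)

lemma rr_min {g : G} {k : ℕ} (h : σ ^ k = g) : rr hgen g ≤ k := Nat.find_min' _ h

lemma order_eq (hcard : Fintype.card G = n) : orderOf σ = n := by
  rw [← hcard, ← Nat.card_eq_fintype_card]
  exact orderOf_eq_card_of_forall_mem_zpowers hgen

lemma rr_pow (hcard : Fintype.card G = n) {i : ℕ} (hi : i < n) : rr hgen (σ ^ i) = i := by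
  have h1 : rr hgen (σ ^ i) ≤ i := rr_min hgen rfl
  have h2 : σ ^ (rr hgen (σ ^ i)) = σ ^ i := rr_spec hgen _
  have ho : orderOf σ = n := order_eq hgen hcard
  exact pow_injOn_Iio_orderOf (by simp [ho]; omega) (by simp [ho, hi]) h2

lemma rr_lt (hcard : Fintype.card G = n) (g : G) : rr hgen g < n := by
  have ho : orderOf σ = n := order_eq hgen hcard
  have hn0 : 0 < n := by
    rw [← hcard]; exact Fintype.card_pos
  have h3 : σ ^ (rr hgen g % n) = g := by
    conv_rhs => rw [← rr_spec hgen g]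
    rw [← ho]; exact pow_mod_orderOf σ _
  have h4 := rr_min hgen h3
  have h5 : rr hgen g % n < n := Nat.mod_lt _ hn0
  omega

lemma rr_eq_zero_iff (g : G) : rr hgen g = 0 ↔ g = 1 := by
  constructor
  · intro h
    have := rr_spec hgen g
    rw [h, pow_zero] at this; exact this.symm
  · rintro rfl
    have : rr hgen (1 : G) ≤ 0 := rr_min hgen (pow_zero σ)
    omega

lemma pow_card (hcard : Fintype.card G = n) : σ ^ n = 1 := by
  rw [← order_eq hgen hcard]; exact pow_orderOf_eq_one σ

lemma rr_mul_sigma (hcard : Fintype.card G = n) (hn : 1 ≤ n) (g : G) :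
    rr hgen (σ * g) = if rr hgen g = n - 1 then 0 else rr hgen g + 1 := by
  have hlt := rr_lt hgen hcard g
  have hspec := rr_spec hgen g
  split_ifs with h
  · rw [rr_eq_zero_iff hgen]
    rw [← hspec, h, ← pow_succ']
    have hh : n - 1 + 1 = n := by omega
    rw [hh, pow_card hgen hcard]
  · have hh : σ * g = σ ^ (rr hgen g + 1) := by rw [pow_succ', hspec]
    rw [hh, rr_pow hgen hcard (by omega)]

lemma sigma_mul_eq_one_iff (hcard : Fintype.card G = n) (hn : 1 ≤ n) (g : G) :
    σ * g = 1 ↔ rr hgen g = n - 1 := by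
  have h2 := rr_mul_sigma hgen hcard hn g
  have hz := rr_eq_zero_iff hgen (σ * g)
  constructor
  · intro h1
    by_contra hne
    rw [if_neg hne] at h2
    rw [← hz] at h1
    omega
  · intro h1
    rw [if_pos h1] at h2
    rw [← hz, h2]

end Ind

section Bform
open scoped Classical
variable {G : Type*} [Group G]

/-- The bilinear form coefficients. -/
noncomputable def bfun [Fintype G] {σ : G} (hgen : ∀ g : G, g ∈ Subgroup.zpowers σ) (g h : G) : ℤ :=
  if rr hgen g ≠ 0 ∧ rr hgen g ≤ rr hgen h then 1 else 0

lemma bfun_shift [Fintype G] {σ : G} (hgen : ∀ g : G, g ∈ Subgroup.zpowers σ) {n : ℕ}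
    (hcard : Fintype.card G = n) (hn : 1 ≤ n) (g h : G) :
    bfun hgen (σ * g) (σ * h) =
      bfun hgen g h + (if g = 1 then 1 else 0) - (if σ * h = 1 then 1 else 0) := by
  have hg := rr_mul_sigma hgen hcard hn g
  have hh := rr_mul_sigma hgen hcard hn h
  have hg1 : (g = 1) ↔ rr hgen g = 0 := (rr_eq_zero_iff hgen g).symm
  have hh1 : (σ * h = 1) ↔ rr hgen h = n - 1 := sigma_mul_eq_one_iff hgen hcard hn h
  have hgl := rr_lt hgen hcard g
  have hhl := rr_lt hgen hcard h
  unfold bfun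
  rw [hg, hh]
  simp only [hg1, hh1]
  split_ifs <;> omega

/-- The bilinear pairing on the group algebra with coefficients `b`. -/
noncomputable def Cmap (b : G → G → ℤ) :
    MonoidAlgebra ℤ G →ₗ[ℤ] MonoidAlgebra ℤ G →ₗ[ℤ] ℤ :=
  Finsupp.lift (MonoidAlgebra ℤ G →ₗ[ℤ] ℤ) ℤ G (fun g => Finsupp.lift ℤ ℤ G (b g) ∘ₗ
    (MonoidAlgebra.coeffLinearEquiv ℤ).toLinearMap) ∘ₗ (MonoidAlgebra.coeffLinearEquiv ℤ).toLinearMap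

lemma Cmap_single (b : G → G → ℤ) (g h : G) (a c : ℤ) :
    Cmap b (single g a) (single h c) = a * (c * b g h) := by
  simp [Cmap, MonoidAlgebra.coeffLinearEquiv, mul_assoc]

end Bform

section Fmap
set_option synthInstance.maxHeartbeats 1000000
set_option maxHeartbeats 1000000
open scoped Classical
variable {G : Type*} [Group G] [Fintype G] {σ : G} {n : ℕ}

lemma Cmap_shift (hgen : ∀ g : G, g ∈ Subgroup.zpowers σ)
    (hcard : Fintype.card G = n) (hn : 1 ≤ n) (x y : MonoidAlgebra ℤ G) :
    Cmap (bfun hgen) (single σ 1 * x) (single σ 1 * y)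
      = Cmap (bfun hgen) x y + x.coeff 1 * augMap G y
        - augMap G x * ((single σ 1 * y : MonoidAlgebra ℤ G).coeff 1) := by
  induction x using MonoidAlgebra.induction_linear with
  | zero => simp
  | add f g hf hg =>
      simp only [mul_add, map_add, LinearMap.add_apply, MonoidAlgebra.coeff_add, Finsupp.add_apply] at *
      rw [hf, hg]; ring
  | single g a =>
      induction y using MonoidAlgebra.induction_linear with
      | zero => simp
      | add f' g' hf' hg' =>
          have e3 : ∀ (u v : MonoidAlgebra ℤ G), (u + v).coeff 1 = u.coeff 1 + v.coeff 1 :=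
            fun u v => Finsupp.add_apply u.coeff v.coeff 1
          simp only [mul_add, map_add, LinearMap.add_apply, Finsupp.add_apply] at *
          rw [hf', hg', e3]; ring
      | single h c =>
          rw [single_mul_single, single_mul_single, one_mul, one_mul,
            Cmap_single, Cmap_single, bfun_shift hgen hcard hn g h]
          have e1 : (single g a : MonoidAlgebra ℤ G).coeff 1 = if g = 1 then a else 0 :=
            Finsupp.single_apply
          have e2 : (single (σ * h) c : MonoidAlgebra ℤ G).coeff 1 = if σ * h = 1 then c else 0 :=
            Finsupp.single_apply
          rw [e1, e2, augMap_single, augMap_single]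
          split_ifs <;> ring

/-- restriction of the pairing to the augmentation ideal -/
noncomputable def Bres (b : G → G → ℤ) : augIdeal G →ₗ[ℤ] augIdeal G →ₗ[ℤ] ℤ :=
  LinearMap.compl₁₂ (Cmap b) (augIdeal G).subtype (augIdeal G).subtype

lemma Bres_apply (b : G → G → ℤ) (x y : augIdeal G) :
    Bres b x y = Cmap b (x : MonoidAlgebra ℤ G) (y : MonoidAlgebra ℤ G) := rfl

/-- the invariant functional on X ⊗ X -/
noncomputable def fmap (hgen : ∀ g : G, g ∈ Subgroup.zpowers σ) :
    TensorProduct ℤ (augIdeal G) (augIdeal G) →ₗ[ℤ] ℤ :=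
  TensorProduct.lift (Bres (bfun hgen))

lemma fmap_tmul (hgen : ∀ g : G, g ∈ Subgroup.zpowers σ) (x y : augIdeal G) :
    fmap hgen (x ⊗ₜ[ℤ] y) = Cmap (bfun hgen) (x : MonoidAlgebra ℤ G) (y : MonoidAlgebra ℤ G) := rfl

lemma fmap_sigma_inv (hgen : ∀ g : G, g ∈ Subgroup.zpowers σ)
    (hcard : Fintype.card G = n) (hn : 1 ≤ n)
    (t : TensorProduct ℤ (augIdeal G) (augIdeal G)) :
    fmap hgen (TensorProduct.map (augAction σ) (augAction σ) t) = fmap hgen t := by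
  induction t with
  | zero => simp
  | tmul x y =>
      rw [TensorProduct.map_tmul, fmap_tmul, fmap_tmul, coe_augAction, coe_augAction,
        Cmap_shift hgen hcard hn]
      have hx : augMap G (x : MonoidAlgebra ℤ G) = 0 := x.2
      have hy : augMap G (y : MonoidAlgebra ℤ G) = 0 := y.2
      rw [hx, hy]; ring
  | add u v hu hv => rw [map_add, map_add, hu, hv, map_add]

lemma augAction_pow (g : G) (k : ℕ) :
    augAction (g ^ (k+1)) = (augAction g).comp (augAction (g ^ k)) := by
  rw [pow_succ', augAction_mul]

lemma fmap_inv (hgen : ∀ g : G, g ∈ Subgroup.zpowers σ)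
    (hcard : Fintype.card G = n) (hn : 1 ≤ n) (g : G)
    (t : TensorProduct ℤ (augIdeal G) (augIdeal G)) :
    fmap hgen (TensorProduct.map (augAction g) (augAction g) t) = fmap hgen t := by
  obtain ⟨k, rfl⟩ := exists_pow hgen g
  induction k generalizing t with
  | zero =>
      rw [pow_zero, augAction_one, TensorProduct.map_id]; rfl
  | succ k ih =>
      rw [augAction_pow, TensorProduct.map_comp, LinearMap.comp_apply,
        fmap_sigma_inv hgen hcard hn, ih]

end Fmap

section Tvec
set_option synthInstance.maxHeartbeats 1000000
set_option maxHeartbeats 1000000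
open scoped Classical
variable {G : Type*} [Group G] [Fintype G]

/-- The invariant tensor `∑ g, (g-1) ⊗ (g-1 - (gσ-1))`. -/
noncomputable def tvec (σ : G) : TensorProduct ℤ (augIdeal G) (augIdeal G) :=
  ∑ g : G, (xg g) ⊗ₜ[ℤ] (xg g - xg (g * σ))

lemma tvec_sigma_inv (σ : G) :
    TensorProduct.map (augAction σ) (augAction σ) (tvec σ) = tvec σ := by
  unfold tvec
  rw [map_sum]
  have step : ∀ g : G,
      TensorProduct.map (augAction σ) (augAction σ) ((xg g) ⊗ₜ[ℤ] (xg g - xg (g * σ)))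
        = (xg (σ * g)) ⊗ₜ[ℤ] (xg (σ * g) - xg (σ * g * σ))
          - (xg σ) ⊗ₜ[ℤ] (xg (σ * g) - xg (σ * g * σ)) := by
    intro g
    rw [TensorProduct.map_tmul, map_sub, augAction_xg, augAction_xg,
      sub_sub_sub_cancel_right, TensorProduct.sub_tmul, mul_assoc]
  simp only [step]
  rw [Finset.sum_sub_distrib, ← TensorProduct.tmul_sum, Finset.sum_sub_distrib]
  have h1 : ∑ g : G, xg (σ * g) = ∑ g : G, xg g :=
    Fintype.sum_equiv (Equiv.mulLeft σ) _ _ (fun g => rfl)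
  have h2 : ∑ g : G, xg (σ * g * σ) = ∑ g : G, xg g :=
    Fintype.sum_equiv ((Equiv.mulLeft σ).trans (Equiv.mulRight σ)) _ _ (fun g => rfl)
  rw [h1, h2, sub_self, TensorProduct.tmul_zero, sub_zero]
  refine Fintype.sum_equiv (Equiv.mulLeft σ) _ _ (fun g => ?_)
  simp only [Equiv.coe_mulLeft]

lemma tvec_inv {σ : G} (hgen : ∀ g : G, g ∈ Subgroup.zpowers σ) (g : G) :
    TensorProduct.map (augAction g) (augAction g) (tvec σ) = tvec σ := by
  obtain ⟨k, rfl⟩ := exists_pow hgen g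
  induction k with
  | zero => rw [pow_zero, augAction_one, TensorProduct.map_id]; rfl
  | succ k ih =>
      rw [augAction_pow, TensorProduct.map_comp, LinearMap.comp_apply, ih, tvec_sigma_inv]

lemma rr_one {σ : G} (hgen : ∀ g : G, g ∈ Subgroup.zpowers σ) : rr hgen (1 : G) = 0 :=
  (rr_eq_zero_iff hgen 1).mpr rfl

lemma fmap_xg {σ : G} (hgen : ∀ g : G, g ∈ Subgroup.zpowers σ) (g h : G) :
    fmap hgen ((xg g) ⊗ₜ[ℤ] (xg h)) = bfun hgen g h := by
  rw [fmap_tmul]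
  show Cmap (bfun hgen) (single g 1 - 1) (single h 1 - 1) = bfun hgen g h
  have hone : (1 : MonoidAlgebra ℤ G) = single (1 : G) 1 := rfl
  rw [hone]
  simp only [map_sub, LinearMap.sub_apply, Cmap_single]
  have hb1 : bfun hgen g (1 : G) = 0 := by
    unfold bfun
    rw [rr_one hgen]
    split_ifs with h1
    · omega
    · rfl
  have hb2 : bfun hgen (1 : G) h = 0 := by
    unfold bfun
    rw [rr_one hgen]
    split_ifs with h1
    · omega
    · rfl
  have hb3 : bfun hgen (1 : G) (1 : G) = 0 := by
    unfold bfun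
    rw [rr_one hgen]
    split_ifs with h1
    · omega
    · rfl
  rw [hb1, hb2, hb3]
  ring

noncomputable def Eequiv {σ : G} (hgen : ∀ g : G, g ∈ Subgroup.zpowers σ) {n : ℕ}
    (hcard : Fintype.card G = n) : Fin n ≃ G where
  toFun i := σ ^ (i : ℕ)
  invFun g := ⟨rr hgen g, rr_lt hgen hcard g⟩
  left_inv i := Fin.ext (rr_pow hgen hcard i.2)
  right_inv g := rr_spec hgen g

lemma fmap_tvec {σ : G} (hgen : ∀ g : G, g ∈ Subgroup.zpowers σ) {n : ℕ}
    (hcard : Fintype.card G = n) (hn2 : 2 ≤ n) :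
    fmap hgen (tvec σ) = 1 := by
  unfold tvec
  rw [map_sum]
  have step : ∀ g : G, fmap hgen ((xg g) ⊗ₜ[ℤ] (xg g - xg (g * σ)))
      = bfun hgen g g - bfun hgen g (g * σ) := by
    intro g
    rw [TensorProduct.tmul_sub, map_sub, fmap_xg, fmap_xg]
  simp only [step]
  have hre : ∑ g : G, (bfun hgen g g - bfun hgen g (g * σ))
      = ∑ i : Fin n, (bfun hgen (σ ^ (i : ℕ)) (σ ^ (i : ℕ))
          - bfun hgen (σ ^ (i : ℕ)) (σ ^ (i : ℕ) * σ)) :=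
    (Fintype.sum_equiv (Eequiv hgen hcard) _ _ (fun i => rfl)).symm
  rw [hre]
  have hterm : ∀ i : Fin n,
      (bfun hgen (σ ^ (i : ℕ)) (σ ^ (i : ℕ)) - bfun hgen (σ ^ (i : ℕ)) (σ ^ (i : ℕ) * σ))
        = if i = (⟨n - 1, by omega⟩ : Fin n) then 1 else 0 := by
    intro i
    have hi := i.2
    have hri : rr hgen (σ ^ (i : ℕ)) = (i : ℕ) := rr_pow hgen hcard hi
    have hsucc : σ ^ (i : ℕ) * σ = σ ^ ((i : ℕ) + 1) := (pow_succ σ (i : ℕ)).symm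
    by_cases hc : (i : ℕ) + 1 < n
    · have hr2 : rr hgen (σ ^ (i : ℕ) * σ) = (i : ℕ) + 1 := by
        rw [hsucc]; exact rr_pow hgen hcard hc
      unfold bfun
      rw [hri, hr2]
      have hne : i ≠ (⟨n - 1, by omega⟩ : Fin n) := by
        intro he
        have := congrArg (Fin.val) he
        simp at this
        omega
      rw [if_neg hne]
      split_ifs <;> omega
    · have hlast : (i : ℕ) = n - 1 := by omega
      have hr2 : rr hgen (σ ^ (i : ℕ) * σ) = 0 := by
        rw [hsucc]
        have : (i : ℕ) + 1 = n := by omega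
        rw [this, pow_card hgen hcard, rr_one hgen]
      unfold bfun
      rw [hri, hr2]
      have heq : i = (⟨n - 1, by omega⟩ : Fin n) := Fin.ext hlast
      rw [if_pos heq]
      split_ifs <;> omega
  simp only [hterm]
  rw [Finset.sum_ite_eq' Finset.univ]
  simp

end Tvec

/-- Let `G` be a finite cyclic group of order `n ≥ 1` and `X` the
augmentation ideal of `ℤ[G]`. Then there exist `G`-module homomorphisms
`e : ℤ → X ⊗ X` and `f : X ⊗ X → ℤ` (trivial action on `ℤ`, diagonal action on
`X ⊗ X`) such that `f ∘ e` is multiplication by `n - 1`. -/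
theorem stmt4 (n : ℕ) (hn : 1 ≤ n) (G : Type*) [Group G] [Fintype G]
    (σ : G) (hgen : ∀ g : G, g ∈ Subgroup.zpowers σ) (hcard : Fintype.card G = n) :
    ∃ (e : ℤ →ₗ[ℤ] TensorProduct ℤ (augIdeal G) (augIdeal G))
      (f : TensorProduct ℤ (augIdeal G) (augIdeal G) →ₗ[ℤ] ℤ),
      (∀ (g : G) (m : ℤ),
        TensorProduct.map (augAction g) (augAction g) (e m) = e m) ∧
      (∀ (g : G) (t : TensorProduct ℤ (augIdeal G) (augIdeal G)),
        f (TensorProduct.map (augAction g) (augAction g) t) = f t) ∧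
      (∀ m : ℤ, f (e m) = ((n : ℤ) - 1) * m) := by
  classical
  refine ⟨LinearMap.toSpanSingleton ℤ _ (((n : ℤ) - 1) • tvec σ), fmap hgen, ?_, ?_, ?_⟩
  · intro g m
    rw [LinearMap.toSpanSingleton_apply, map_smul, map_smul, tvec_inv hgen]
  · intro g t
    exact fmap_inv hgen hcard hn g t
  · intro m
    rw [LinearMap.toSpanSingleton_apply, map_smul, map_smul]
    by_cases h2 : 2 ≤ n
    · rw [fmap_tvec hgen hcard h2]
      simp only [smul_eq_mul, mul_one]
      ring
    · have hone : n = 1 := by omega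
      subst hone
      simp
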